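/- For every t-shape T there exists an integer m ≥ 0 such that the m-th iterated Magnus derivative D^m(T) is a power shape t^q for some q ∈ ℤ. Consequently the complexity of every t-shape is well defined. -/

import Mathlib

/-!
A *t-shape* is a finite cyclic word in the symbols `t` and `t⁻¹`.  We represent a
t-shape by a list of Booleans (`true` = `t` = `+1`, `false` = `t⁻¹` = `−1`),
regarded up to cyclic rotation (`ShapeRotEquiv`).
-/

/-- The `i`-th entry of a list, read cyclically. -/
def cyclicGet (l : List Bool) (i : ℕ) : Bool :=
  l.getD (i % l.length) true

/-- Two lists represent the same cyclic word iff one is a rotation of the other. -/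
def ShapeRotEquiv (l l' : List Bool) : Prop :=
  ∃ n : ℕ, l.rotate n = l'

/-- The entry at (cyclic) position `i` is deleted by the Magnus derivative:
either it is a `+1` immediately followed (cyclically) by a `−1`, or it is a `−1`
immediately preceded (cyclically) by a `+1`.  (Such occurrences of the subword
`t t⁻¹` are automatically pairwise disjoint.) -/
def magnusDeleted (l : List Bool) (i : ℕ) : Bool :=
  (cyclicGet l i && !cyclicGet l (i + 1)) ||
    (!cyclicGet l i && cyclicGet l (i + l.length - 1))

/-- The Magnus derivative of a t-shape: simultaneously delete all cyclic
occurrences of the subword `t t⁻¹` and close up. -/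
def magnusD (l : List Bool) : List Bool :=
  ((List.range l.length).filter (fun i => !magnusDeleted l i)).map (cyclicGet l)

/-- A power shape `t^q`, `q ∈ ℤ`: all entries equal (or the empty shape). -/
def IsPowerShape (l : List Bool) : Prop :=
  (∀ x ∈ l, x = true) ∨ (∀ x ∈ l, x = false)

/-- The complexity of a t-shape: the least `m ≥ 0` such that the `m`-th iterated
Magnus derivative is a power shape. -/
noncomputable def shapeComplexity (l : List Bool) : ℕ :=
  sInf {m : ℕ | IsPowerShape (magnusD^[m] l)}

lemma cyclicGet_mod (l : List Bool) (i : ℕ) : cyclicGet l (i % l.length) = cyclicGet l i := by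
  simp [cyclicGet, Nat.mod_mod_of_dvd, Nat.mod_mod]

lemma cyclicGet_add_length (l : List Bool) (i : ℕ) :
    cyclicGet l (i + l.length) = cyclicGet l i := by
  rcases Nat.eq_zero_or_pos l.length with h | h
  · simp [h]
  · simp [cyclicGet, Nat.add_mod_right]

lemma cyclicGet_rotate_one (l : List Bool) (i : ℕ) :
    cyclicGet (l.rotate 1) i = cyclicGet l (i + 1) := by
  rcases Nat.eq_zero_or_pos l.length with h | h
  · rw [List.eq_nil_of_length_eq_zero h]; rfl
  · have hL : (l.rotate 1).length = l.length := List.length_rotate l 1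
    have h1 : i % (l.rotate 1).length < (l.rotate 1).length := Nat.mod_lt _ (by omega)
    have h2 : (i + 1) % l.length < l.length := Nat.mod_lt _ h
    rw [cyclicGet, cyclicGet, List.getD_eq_getElem _ _ h1, List.getD_eq_getElem _ _ h2,
      List.getElem_rotate]
    congr 1
    rw [hL, Nat.mod_add_mod]

lemma magnusDeleted_rotate_one (l : List Bool) (i : ℕ) :
    magnusDeleted (l.rotate 1) i = magnusDeleted l (i + 1) := by
  rcases Nat.eq_zero_or_pos l.length with h | h
  · rw [List.eq_nil_of_length_eq_zero h]; rfl
  · have hL : (l.rotate 1).length = l.length := List.length_rotate l 1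
    rw [magnusDeleted, magnusDeleted, cyclicGet_rotate_one, cyclicGet_rotate_one, hL]
    congr 2
    have : i + l.length - 1 + 1 = i + 1 + l.length - 1 := by omega
    rw [cyclicGet_rotate_one, this]

lemma magnusD_rotate_one (l : List Bool) :
    ShapeRotEquiv (magnusD l) (magnusD (l.rotate 1)) := by
  rcases Nat.eq_zero_or_pos l.length with h | h
  · rw [List.eq_nil_of_length_eq_zero h]; exact ⟨0, rfl⟩
  · obtain ⟨n, hL⟩ : ∃ n, l.length = n + 1 := ⟨l.length - 1, by omega⟩
    have hrotL : (l.rotate 1).length = l.length := List.length_rotate l 1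
    have hD1 : magnusD (l.rotate 1) =
        (((List.range n).filter (fun i => !magnusDeleted l (i + 1))).map
          (fun i => cyclicGet l (i + 1))) ++
        (if !magnusDeleted l 0 then [cyclicGet l 0] else []) := by
      rw [magnusD, hrotL, hL]
      have heq : ∀ x, (fun i => !magnusDeleted (l.rotate 1) i) x =
          (fun i => !magnusDeleted l (i + 1)) x := by
        intro x; simp [magnusDeleted_rotate_one]
      rw [List.filter_congr (fun x _ => heq x), List.range_succ, List.filter_append,
        List.map_append]
      congr 1
      · apply List.map_congr_left
        intro x hx
        simp only [List.mem_filter, List.mem_range] at hx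
        rw [cyclicGet_rotate_one]
      · have hn1 : n + 1 = 0 + l.length := by omega
        have hdel : magnusDeleted l (n + 1) = magnusDeleted l 0 := by
          rw [magnusDeleted, magnusDeleted, hn1, cyclicGet_add_length]
          congr 2
          · rw [show 0 + l.length + 1 = 1 + l.length by omega, cyclicGet_add_length]
          · rw [show 0 + l.length + l.length - 1 = (0 + l.length - 1) + l.length by omega,
              cyclicGet_add_length]
        have hget : cyclicGet (l.rotate 1) n = cyclicGet l 0 := by
          rw [cyclicGet_rotate_one, hn1, cyclicGet_add_length]
        simp only [List.filter_cons, List.filter_nil, hdel]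
        cases hb : magnusDeleted l 0 <;> simp [hget]
    have hD0 : magnusD l =
        (if !magnusDeleted l 0 then [cyclicGet l 0] else []) ++
        (((List.range n).filter (fun i => !magnusDeleted l (i + 1))).map
          (fun i => cyclicGet l (i + 1))) := by
      rw [magnusD, hL, List.range_succ_eq_map, List.filter_cons, List.filter_map]
      cases hb : magnusDeleted l 0 <;>
        simp [Function.comp_def, Nat.succ_eq_add_one]
    rw [hD0, hD1]
    cases hb : magnusDeleted l 0
    · exact ⟨1, by simp [List.rotate_cons_succ]⟩
    · exact ⟨0, by simp⟩

lemma shapeRotEquiv_trans {a b c : List Bool} (h1 : ShapeRotEquiv a b)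
    (h2 : ShapeRotEquiv b c) : ShapeRotEquiv a c := by
  obtain ⟨n, rfl⟩ := h1; obtain ⟨m, rfl⟩ := h2
  exact ⟨n + m, (List.rotate_rotate a n m).symm⟩

lemma magnusD_rotate (l : List Bool) (n : ℕ) :
    ShapeRotEquiv (magnusD l) (magnusD (l.rotate n)) := by
  induction n generalizing l with
  | zero => exact ⟨0, by simp⟩
  | succ k ih =>
    have : l.rotate (k + 1) = (l.rotate 1).rotate k := by
      rw [List.rotate_rotate, Nat.add_comm]
    rw [this]
    exact shapeRotEquiv_trans (magnusD_rotate_one l) (ih (l.rotate 1))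

lemma magnusD_congr {l l' : List Bool} (h : ShapeRotEquiv l l') :
    ShapeRotEquiv (magnusD l) (magnusD l') := by
  obtain ⟨n, rfl⟩ := h; exact magnusD_rotate l n

lemma isPowerShape_congr {l l' : List Bool} (h : ShapeRotEquiv l l') :
    (IsPowerShape l ↔ IsPowerShape l') := by
  obtain ⟨n, rfl⟩ := h
  unfold IsPowerShape
  simp [List.mem_rotate]

lemma cyclicGet_mem {l : List Bool} (h : 0 < l.length) (i : ℕ) : cyclicGet l i ∈ l := by
  have hi : i % l.length < l.length := Nat.mod_lt _ h
  rw [cyclicGet, List.getD_eq_getElem _ _ hi]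
  exact List.getElem_mem hi

lemma exists_deleted {l : List Bool} (h : ¬ IsPowerShape l) :
    ∃ i ∈ List.range l.length, magnusDeleted l i = true := by
  rw [IsPowerShape, not_or] at h
  obtain ⟨h1, h2⟩ := h
  push_neg at h1 h2
  obtain ⟨x, hx, hx'⟩ := h1
  obtain ⟨y, hy, hy'⟩ := h2
  have hxf : x = false := by cases x <;> simp_all
  have hyt : y = true := by cases y <;> simp_all
  subst hxf hyt
  have hL : 0 < l.length := List.length_pos_iff.2 (by rintro rfl; simp at hx)
  obtain ⟨j, hj, hjt⟩ := List.mem_iff_getElem.1 hy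
  obtain ⟨k, hk, hkf⟩ := List.mem_iff_getElem.1 hx
  have hcj : cyclicGet l j = true := by
    rw [cyclicGet, Nat.mod_eq_of_lt hj, List.getD_eq_getElem _ _ hj, hjt]
  have hck : cyclicGet l k = false := by
    rw [cyclicGet, Nat.mod_eq_of_lt hk, List.getD_eq_getElem _ _ hk, hkf]
  -- find i with cyclicGet l i = true and cyclicGet l (i+1) = false
  have key : ∃ i, cyclicGet l i = true ∧ cyclicGet l (i + 1) = false := by
    by_contra hcon
    push_neg at hcon
    have step : ∀ i, cyclicGet l i = true → cyclicGet l (i + 1) = true := by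
      intro i hi
      have := hcon i hi
      cases hb : cyclicGet l (i+1) <;> simp_all
    have all' : ∀ d, cyclicGet l (j + d) = true := by
      intro d
      induction d with
      | zero => simpa using hcj
      | succ e ih => rw [← Nat.add_assoc]; exact step _ ih
    have : cyclicGet l (j + (l.length - j + k)) = true := all' _
    rw [show j + (l.length - j + k) = k + l.length by omega, cyclicGet_add_length] at this
    rw [hck] at this; exact Bool.false_ne_true this
  obtain ⟨i, hi1, hi2⟩ := key
  refine ⟨i % l.length, List.mem_range.2 (Nat.mod_lt _ hL), ?_⟩
  rw [magnusDeleted]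
  have e1 : cyclicGet l (i % l.length) = true := by rw [cyclicGet_mod, hi1]
  have e2 : cyclicGet l (i % l.length + 1) = false := by
    rw [cyclicGet, Nat.mod_add_mod, ← cyclicGet, hi2]
  simp [e1, e2]

lemma length_magnusD_lt {l : List Bool} (h : ¬ IsPowerShape l) :
    (magnusD l).length < l.length := by
  obtain ⟨i, hi, hdel⟩ := exists_deleted h
  rw [magnusD, List.length_map]
  calc (((List.range l.length).filter (fun i => !magnusDeleted l i))).length
      < (List.range l.length).length :=
        List.length_filter_lt_length_iff_exists.2 ⟨i, hi, by simp [hdel]⟩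
    _ = l.length := List.length_range

lemma exists_power_aux : ∀ N, ∀ l : List Bool, l.length ≤ N →
    ∃ m : ℕ, IsPowerShape (magnusD^[m] l) := by
  intro N
  induction N with
  | zero =>
    intro l hl
    rw [List.length_eq_zero_iff.1 (Nat.le_zero.1 hl)]
    exact ⟨0, Or.inl (by simp)⟩
  | succ k ih =>
    intro l hl
    by_cases hp : IsPowerShape l
    · exact ⟨0, hp⟩
    · have := length_magnusD_lt hp
      obtain ⟨m, hm⟩ := ih (magnusD l) (by omega)
      exact ⟨m + 1, by rwa [Function.iterate_succ_apply]⟩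

lemma iterate_congr {l l' : List Bool} (h : ShapeRotEquiv l l') (m : ℕ) :
    ShapeRotEquiv (magnusD^[m] l) (magnusD^[m] l') := by
  induction m with
  | zero => exact h
  | succ k ih =>
    rw [Function.iterate_succ_apply', Function.iterate_succ_apply']
    exact magnusD_congr ih

/-- For every t-shape `T` there exists an integer `m ≥ 0` such that the
`m`-th iterated Magnus derivative `D^m(T)` is a power shape `t^q` for some `q ∈ ℤ`.
Consequently the complexity of every t-shape is well defined (in particular it is
independent of the chosen representative of the cyclic word). -/
theorem magnus_derivative_reaches_power_shape :
    (∀ l : List Bool, ∃ m : ℕ, IsPowerShape (magnusD^[m] l)) ∧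
      (∀ l l' : List Bool, ShapeRotEquiv l l' →
        shapeComplexity l = shapeComplexity l') := by
  constructor
  · intro l; exact exists_power_aux l.length l le_rfl
  · intro l l' h
    unfold shapeComplexity
    congr 1
    ext m
    exact isPowerShape_congr (iterate_congr h m)
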